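/- Let Q be a real n×n matrix such that the operator norm (with respect to the Euclidean norm on ℝⁿ) of exp(Qx) is at most 1 for all x ≥ 0. If there exists x_0 > 0 with ‖exp(Q x_0)‖_op = 1, then ‖exp(Qx)‖_op = 1 for all x ≥ 0. -/

import Mathlib

open Real Matrix
open scoped Matrix.Norms.L2Operator

set_option maxHeartbeats 1000000 in
/-- If `‖exp(Qx)‖ ≤ 1` for all `x ≥ 0` (Euclidean operator norm) and `‖exp(Qx₀)‖ = 1`
for some `x₀ > 0`, then `‖exp(Qx)‖ = 1` for all `x ≥ 0`. -/
theorem norm_exp_eq_one_of_eq_one (n : ℕ) (Q : Matrix (Fin n) (Fin n) ℝ)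
    (h : ∀ x : ℝ, 0 ≤ x → ‖NormedSpace.exp (x • Q)‖ ≤ 1)
    (hx0 : ∃ x0 : ℝ, 0 < x0 ∧ ‖NormedSpace.exp (x0 • Q)‖ = 1) :
    ∀ x : ℝ, 0 ≤ x → ‖NormedSpace.exp (x • Q)‖ = 1 := by
  classical
  obtain ⟨x0, hx0pos, hx0norm⟩ := hx0
  let +nondep : NormedAlgebra ℚ (Matrix (Fin n) (Fin n) ℝ) := .restrictScalars ℚ ℝ _
  let +nondep : NormedAlgebra ℚ (EuclideanSpace ℝ (Fin n) →L[ℝ] EuclideanSpace ℝ (Fin n)) :=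
    .restrictScalars ℚ ℝ _
  set L : EuclideanSpace ℝ (Fin n) →L[ℝ] EuclideanSpace ℝ (Fin n) :=
    toEuclideanCLM (𝕜 := ℝ) Q with hL
  -- transfer norms to the CLM side
  have hc : Continuous (toEuclideanCLM (𝕜 := ℝ) (n := Fin n)) :=
    (AddMonoidHomClass.isometry_of_norm (toEuclideanCLM (𝕜 := ℝ) (n := Fin n)) fun x => (Matrix.cstar_norm_def x).symm).continuous
  have key : ∀ t : ℝ, toEuclideanCLM (𝕜 := ℝ) (NormedSpace.exp (t • Q))
      = NormedSpace.exp (t • L) := by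
    intro t
    rw [NormedSpace.map_exp _ hc, _root_.map_smul]
  have keyn : ∀ t : ℝ, ‖NormedSpace.exp (t • Q)‖ = ‖NormedSpace.exp (t • L)‖ := by
    intro t
    rw [Matrix.cstar_norm_def, key]
  -- nontriviality: n ≠ 0
  rcases Nat.eq_zero_or_pos n with hn | hn
  · exfalso
    subst hn
    have h0 : (NormedSpace.exp (x0 • L)) = 0 := Subsingleton.elim _ _
    have := keyn x0
    rw [hx0norm, h0, norm_zero] at this
    exact one_ne_zero this
  haveI : Nonempty (Fin n) := ⟨⟨0, hn⟩⟩
  -- norm-attaining vector for exp(x0 • L)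
  have hT1 : ‖NormedSpace.exp (x0 • L)‖ = 1 := (keyn x0).symm.trans hx0norm
  obtain ⟨v, hv, hTv⟩ : ∃ v : EuclideanSpace ℝ (Fin n), ‖v‖ = 1 ∧ ‖NormedSpace.exp (x0 • L) v‖ = 1 := by
    set T := NormedSpace.exp (x0 • L)
    have hne : (Metric.sphere (0 : EuclideanSpace ℝ (Fin n)) 1).Nonempty :=
      NormedSpace.sphere_nonempty.2 zero_le_one
    obtain ⟨v, hv, hmax⟩ := (isCompact_sphere (0 : EuclideanSpace ℝ (Fin n)) 1).exists_isMaxOn hne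
      (T.continuous.norm.continuousOn)
    rw [mem_sphere_zero_iff_norm] at hv
    refine ⟨v, hv, le_antisymm (by simpa [hv, hT1] using T.le_opNorm v) ?_⟩
    have hbound : ‖T‖ ≤ ‖T v‖ := by
      refine T.opNorm_le_bound (norm_nonneg _) fun x => ?_
      rcases eq_or_ne x 0 with rfl | hx
      · simp
      · have hxn : ‖x‖ ≠ 0 := norm_ne_zero_iff.2 hx
        have hu : (‖x‖⁻¹ • x) ∈ Metric.sphere (0 : EuclideanSpace ℝ (Fin n)) 1 := by
          simp [mem_sphere_zero_iff_norm, norm_smul, abs_of_nonneg, inv_mul_cancel₀ hxn]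
        have h1 : ‖T (‖x‖⁻¹ • x)‖ ≤ ‖T v‖ := hmax hu
        rw [_root_.map_smul, norm_smul, norm_inv, norm_norm] at h1
        calc ‖T x‖ = ‖x‖ * (‖x‖⁻¹ * ‖T x‖) := by field_simp
        _ ≤ ‖x‖ * ‖T v‖ := by
            have h0 : (0:ℝ) ≤ ‖x‖ := norm_nonneg _
            nlinarith [h1]
        _ = ‖T v‖ * ‖x‖ := mul_comm _ _
    rw [← hT1]
    exact hbound
  -- the semigroup property
  have hsg : ∀ s t : ℝ, NormedSpace.exp ((s + t) • L)
      = NormedSpace.exp (s • L) * NormedSpace.exp (t • L) := by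
    intro s t
    rw [show (s + t) • L = s • L + t • L from add_smul s t L]
    have hcomm : Commute (s • L) (t • L) := by
      have h1 : (s • L) * (t • L) = (s * t) • (L * L) := by
        ext y; simp [ContinuousLinearMap.mul_apply]; ring
      have h2 : (t • L) * (s • L) = (t * s) • (L * L) := by
        ext y; simp [ContinuousLinearMap.mul_apply]; ring
      show _ = _
      rw [h1, h2, mul_comm s t]
    exact NormedSpace.exp_add_of_commute hcomm
  -- the squared-norm function
  set w : ℝ → EuclideanSpace ℝ (Fin n) := fun t => NormedSpace.exp (t • L) v with hw
  set g : ℝ → ℝ := fun t => ∑ i, (w t i) ^ 2 with hg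
  have hgnorm : ∀ t, g t = ‖w t‖ ^ 2 := by
    intro t
    rw [hg]
    simp only
    rw [EuclideanSpace.norm_eq, Real.sq_sqrt (by positivity)]
    congr 1
    ext i
    rw [Real.norm_eq_abs, sq_abs]
  -- g = 1 on [0, x0]
  have hwle : ∀ t : ℝ, 0 ≤ t → ‖w t‖ ≤ 1 := by
    intro t ht
    calc ‖w t‖ ≤ ‖NormedSpace.exp (t • L)‖ * ‖v‖ := ContinuousLinearMap.le_opNorm _ _
    _ ≤ 1 := by rw [hv, mul_one, ← keyn t]; exact h t ht
  have hgone : ∀ t ∈ Set.Icc (0:ℝ) x0, g t = 1 := by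
    intro t ht
    obtain ⟨ht0, htx0⟩ := ht
    have hdec : NormedSpace.exp (x0 • L) v
        = NormedSpace.exp ((x0 - t) • L) (w t) := by
      rw [hw]
      simp only
      rw [← ContinuousLinearMap.mul_apply, ← hsg, sub_add_cancel]
    have hlow : (1:ℝ) ≤ ‖w t‖ := by
      have h2 : ‖NormedSpace.exp ((x0 - t) • L) (w t)‖
          ≤ ‖NormedSpace.exp ((x0 - t) • L)‖ * ‖w t‖ := ContinuousLinearMap.le_opNorm _ _
      rw [← hdec, hTv] at h2
      have h3 : ‖NormedSpace.exp ((x0 - t) • L)‖ ≤ 1 := by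
        rw [← keyn (x0 - t)]; exact h _ (by linarith)
      nlinarith [hwle t ht0, norm_nonneg (w t), norm_nonneg (NormedSpace.exp ((x0 - t) • L))]
    have : ‖w t‖ = 1 := le_antisymm (hwle t ht0) hlow
    rw [hgnorm, this, one_pow]
  -- g is analytic on ℝ
  have hganalytic : AnalyticOnNhd ℝ g Set.univ := by
    intro t _
    have h0 : AnalyticAt ℝ (fun s : ℝ => s • L) t := analyticAt_id.smul analyticAt_const
    have h1 : AnalyticAt ℝ (fun s : ℝ => NormedSpace.exp (s • L)) t :=
      AnalyticAt.comp (g := NormedSpace.exp) (f := fun s : ℝ => s • L)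
        (NormedSpace.exp_analytic _) h0
    have h2 : AnalyticAt ℝ w t :=
      ((ContinuousLinearMap.apply ℝ (EuclideanSpace ℝ (Fin n)) v).analyticAt _).comp h1
    exact Finset.analyticAt_fun_sum _ fun i _ =>
      (((EuclideanSpace.proj i).analyticAt _).comp h2).pow 2
  -- identity theorem: g = 1 everywhere
  have hgall : ∀ t : ℝ, g t = 1 := by
    have heq : Set.EqOn g (fun _ => 1) Set.univ := by
      apply hganalytic.eqOn_of_preconnected_of_eventuallyEq
        (analyticOnNhd_const) isPreconnected_univ (Set.mem_univ (x0/2))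
      have hmem : Set.Ioo (0:ℝ) x0 ∈ nhds (x0/2) :=
        Ioo_mem_nhds (by linarith) (by linarith)
      filter_upwards [hmem] with s hs
      exact hgone s ⟨hs.1.le, hs.2.le⟩
    intro t
    exact heq (Set.mem_univ t)
  -- conclude
  intro x hx
  refine le_antisymm (h x hx) ?_
  have hwx : ‖w x‖ = 1 := by
    have := hgall x
    rw [hgnorm] at this
    nlinarith [norm_nonneg (w x)]
  have : (1:ℝ) ≤ ‖NormedSpace.exp (x • L)‖ := by
    have h2 : ‖w x‖ ≤ ‖NormedSpace.exp (x • L)‖ * ‖v‖ := ContinuousLinearMap.le_opNorm _ _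
    rw [hwx, hv, mul_one] at h2
    exact h2
  rw [keyn x]
  exact this
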